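/- arXiv:2603.06776 — 4 statements merged into one kernel-verified Lean document; each statement's English description precedes it below -/
import Mathlib

section
/- Mate reduction of the norm square: In the norm square setup, the following two equations are equivalent. (E1) The norm square commutes: BC_*[α] ∘ (F_X whiskered on the left with Nm_f) ∘ BC_![α] = Nm_{df} whiskered with F_Y on the right, as natural transformations df_! ∘ F_Y ⟶ df_* ∘ F_Y. (E2) The wrong-way-counit square commutes: (F_Y whiskered on the left with ν) ∘ (α⁻¹ whiskered with f_! on the right) ∘ (df* whiskered on the left with BC_![α]) = dν whiskered with F_Y on the right, as natural transformations df* ∘ df_! ∘ F_Y ⟶ F_Y. -/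
open CategoryTheory

/-- The Beck–Chevalley transformation of left adjoints associated to a commuting
square `α : fs ⋙ hs ≅ gs ⋙ is`, where `f_! ⊣ f*` and `i_! ⊣ i*`. -/
def bcL {C D E F : Type*} [Category C] [Category D] [Category E] [Category F]
    {gs : C ⥤ D} {fs : C ⥤ E} {is : D ⥤ F} {hs : E ⥤ F}
    {fShriek : E ⥤ C} {iShriek : F ⥤ D}
    (adjF : fShriek ⊣ fs) (adjI : iShriek ⊣ is)
    (α : fs ⋙ hs ≅ gs ⋙ is) : hs ⋙ iShriek ⟶ fShriek ⋙ gs :=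
  Functor.whiskerRight adjF.unit (hs ⋙ iShriek) ≫
    Functor.whiskerRight (Functor.whiskerLeft fShriek α.hom) iShriek ≫
    Functor.whiskerLeft (fShriek ⋙ gs) adjI.counit

/-- The Beck–Chevalley transformation of right adjoints associated to a commuting
square `α : fs ⋙ hs ≅ gs ⋙ is`, where `f* ⊣ f_*` and `i* ⊣ i_*`. -/
def bcR {C D E F : Type*} [Category C] [Category D] [Category E] [Category F]
    {gs : C ⥤ D} {fs : C ⥤ E} {is : D ⥤ F} {hs : E ⥤ F}
    {fStar : E ⥤ C} {iStar : F ⥤ D}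
    (adjF : fs ⊣ fStar) (adjI : is ⊣ iStar)
    (α : fs ⋙ hs ≅ gs ⋙ is) : fStar ⋙ gs ⟶ hs ⋙ iStar :=
  Functor.whiskerLeft (fStar ⋙ gs) adjI.unit ≫
    Functor.whiskerRight (Functor.whiskerLeft fStar α.inv) iStar ≫
    Functor.whiskerRight adjF.counit (hs ⋙ iStar)

/-- Mate reduction of the norm square: the norm square
`BC_*[α] ∘ (F_X ◁ Nm_f) ∘ BC_![α] = Nm_{df} ▷ F_Y` commutes if and only if the
wrong-way-counit square `(F_Y ◁ ν) ∘ (α⁻¹ ▷ f_!) ∘ (df* ◁ BC_![α]) = dν ▷ F_Y`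
commutes.  Here `Nm_f = (f_* ◁ ν) ∘ (η_* ▷ f_!)` and similarly for `Nm_{df}`. -/
theorem mate_reduction_of_norm_square
    {CX CY DX DY : Type*} [Category CX] [Category CY] [Category DX] [Category DY]
    {fs : CX ⥤ CY} {dfs : DX ⥤ DY} {FX : CX ⥤ DX} {FY : CY ⥤ DY}
    {fShriek : CY ⥤ CX} {dfShriek : DY ⥤ DX} {fStar : CY ⥤ CX} {dfStar : DY ⥤ DX}
    (adjf : fShriek ⊣ fs) (adjdf : dfShriek ⊣ dfs)
    (adjfs : fs ⊣ fStar) (adjdfs : dfs ⊣ dfStar)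
    (α : fs ⋙ FY ≅ FX ⋙ dfs)
    (ν : fShriek ⋙ fs ⟶ 𝟭 CY) (dν : dfShriek ⋙ dfs ⟶ 𝟭 DY)
    (Nmf : fShriek ⟶ fStar) (Nmdf : dfShriek ⟶ dfStar)
    (hNmf : Nmf = Functor.whiskerLeft fShriek adjfs.unit ≫ Functor.whiskerRight ν fStar)
    (hNmdf : Nmdf = Functor.whiskerLeft dfShriek adjdfs.unit ≫ Functor.whiskerRight dν dfStar) :
    (bcL adjf adjdf α ≫ Functor.whiskerRight Nmf FX ≫ bcR adjfs adjdfs α =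
        Functor.whiskerLeft FY Nmdf) ↔
      (Functor.whiskerRight (bcL adjf adjdf α) dfs ≫ Functor.whiskerLeft fShriek α.inv ≫
          Functor.whiskerRight ν FY =
        Functor.whiskerLeft FY dν) := by
  have key1 : ∀ Y : CY,
      (bcL adjf adjdf α ≫ Functor.whiskerRight Nmf FX ≫ bcR adjfs adjdfs α).app Y =
        (adjdfs.homEquiv _ _)
          ((Functor.whiskerRight (bcL adjf adjdf α) dfs ≫ Functor.whiskerLeft fShriek α.inv ≫
              Functor.whiskerRight ν FY).app Y) := by
    intro Y
    simp only [bcL, bcR, hNmf, Adjunction.homEquiv_unit, NatTrans.comp_app,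
      Functor.whiskerRight_app, Functor.whiskerLeft_app, Functor.comp_map, Functor.map_comp,
      Category.assoc, Functor.whiskerLeft_comp, Functor.whiskerRight_comp, Functor.comp_obj,
      Functor.id_obj, NatTrans.id_app, Functor.map_id, Category.comp_id,
      Category.id_comp]
    rw [← Adjunction.unit_naturality_assoc, ← Adjunction.unit_naturality_assoc,
      ← Functor.map_comp_assoc, ← Functor.map_comp_assoc,
      ← Functor.comp_map FX dfs, ← Functor.comp_map FX dfs]
    rw [← Adjunction.unit_naturality_assoc, ← Adjunction.unit_naturality_assoc]
    simp only [← Functor.map_comp, Category.assoc]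
    congr 2
    rw [NatTrans.naturality_assoc α.inv, Functor.comp_map, ← Functor.map_comp FY, Functor.map_comp fs,
      Category.assoc, Adjunction.counit_naturality, Adjunction.left_triangle_components_assoc]
    simp
  have key2 : ∀ Y : CY,
      (Functor.whiskerLeft FY Nmdf).app Y =
        (adjdfs.homEquiv ((FY ⋙ dfShriek).obj Y) ((𝟭 CY ⋙ FY).obj Y))
          ((Functor.whiskerLeft FY dν).app Y) := by
    intro Y
    simp [hNmdf, Adjunction.homEquiv_unit]
  constructor
  · intro h
    ext Y
    apply (adjdfs.homEquiv _ _).injective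
    rw [← key1, ← key2, h]
  · intro h
    ext Y
    rw [key1, key2, h]
end

section
/- Base case of the norm square theorem: In the norm square setup, suppose additionally that the unit η_f : id_{C_Y} ⟶ f* ∘ f_! of the adjunction f_! ⊣ f* and the unit η_{df} : id_{D_Y} ⟶ df* ∘ df_! of the adjunction df_! ⊣ df* are natural isomorphisms, and that ν = η_f⁻¹ and dν = η_{df}⁻¹. Then the wrong-way-counit square commutes: (F_Y whiskered on the left with ν) ∘ (α⁻¹ whiskered with f_! on the right) ∘ (df* whiskered on the left with BC_![α]) = dν whiskered with F_Y on the right, as natural transformations df* ∘ df_! ∘ F_Y ⟶ F_Y. -/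
open CategoryTheory

/-- Base case of the norm square theorem: if the units `η_f` and `η_{df}` of the
adjunctions `f_! ⊣ f*` and `df_! ⊣ df*` are natural isomorphisms and the
wrong-way counits are their inverses, then the wrong-way-counit square
`(F_Y ◁ ν) ∘ (α⁻¹ ▷ f_!) ∘ (df* ◁ BC_![α]) = dν ▷ F_Y` commutes. -/
theorem norm_square_base_case
    {CX CY DX DY : Type*} [Category CX] [Category CY] [Category DX] [Category DY]
    {fs : CX ⥤ CY} {dfs : DX ⥤ DY} {FX : CX ⥤ DX} {FY : CY ⥤ DY}
    {fShriek : CY ⥤ CX} {dfShriek : DY ⥤ DX}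
    (adjf : fShriek ⊣ fs) (adjdf : dfShriek ⊣ dfs)
    (α : fs ⋙ FY ≅ FX ⋙ dfs)
    (ν : fShriek ⋙ fs ⟶ 𝟭 CY) (dν : dfShriek ⋙ dfs ⟶ 𝟭 DY)
    [IsIso adjf.unit] [IsIso adjdf.unit]
    (hν : ν = inv adjf.unit) (hdν : dν = inv adjdf.unit) :
    Functor.whiskerRight (bcL adjf adjdf α) dfs ≫ Functor.whiskerLeft fShriek α.inv ≫
        Functor.whiskerRight ν FY =
      Functor.whiskerLeft FY dν := by
  have hc : ∀ X : DX, dfs.map (adjdf.counit.app X) = inv (adjdf.unit.app (dfs.obj X)) :=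
    fun X => IsIso.eq_inv_of_hom_inv_id (adjdf.right_triangle_components X)
  have h : ∀ {A B : DY} (g : A ⟶ B),
      dfs.map (dfShriek.map g) ≫ inv (adjdf.unit.app B) = inv (adjdf.unit.app A) ≫ g := by
    intro A B g
    rw [IsIso.comp_inv_eq, Category.assoc, IsIso.eq_inv_comp]
    simp only [Functor.id_obj, Functor.id_map] at *; exact (adjdf.unit.naturality g).symm
  ext y
  simp only [bcL, hν, hdν, NatTrans.comp_app, Functor.whiskerRight_app, Functor.whiskerLeft_app,
    Functor.comp_map, Functor.comp_obj, Functor.id_obj, NatIso.isIso_inv_app,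
    dfs.map_comp]
  simp only [Category.assoc]
  rw [hc, reassoc_of% h (α.hom.app (fShriek.obj y)), reassoc_of% h (FY.map (adjf.unit.app y))]
  simp
end

section
/- The right Beck–Chevalley transformation is invertible when the norm square commutes: In the norm square setup, suppose that BC_![α] is a natural isomorphism, that the norm maps Nm_f and Nm_{df} are natural isomorphisms, and that the norm square commutes, i.e. BC_*[α] ∘ (F_X whiskered on the left with Nm_f) ∘ BC_![α] = Nm_{df} whiskered with F_Y on the right. Then BC_*[α] is a natural isomorphism, and moreover F_X whiskered on the left with Nm_f is the inverse of the composite BC_![α] ∘ (Nm_{df}⁻¹ whiskered with F_Y on the right) ∘ BC_*[α]. -/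
open CategoryTheory

/-- If `BC_![α]`, `Nm_f` and `Nm_{df}` are natural isomorphisms and the norm
square `BC_*[α] ∘ (F_X ◁ Nm_f) ∘ BC_![α] = Nm_{df} ▷ F_Y` commutes, then
`BC_*[α]` is a natural isomorphism, and `F_X ◁ Nm_f` is (two-sidedly) the
inverse of the composite `BC_![α] ∘ (Nm_{df}⁻¹ ▷ F_Y) ∘ BC_*[α]`. -/
theorem bcR_isIso_of_norm_square
    {CX CY DX DY : Type*} [Category CX] [Category CY] [Category DX] [Category DY]
    {fs : CX ⥤ CY} {dfs : DX ⥤ DY} {FX : CX ⥤ DX} {FY : CY ⥤ DY}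
    {fShriek : CY ⥤ CX} {dfShriek : DY ⥤ DX} {fStar : CY ⥤ CX} {dfStar : DY ⥤ DX}
    (adjf : fShriek ⊣ fs) (adjdf : dfShriek ⊣ dfs)
    (adjfs : fs ⊣ fStar) (adjdfs : dfs ⊣ dfStar)
    (α : fs ⋙ FY ≅ FX ⋙ dfs)
    (ν : fShriek ⋙ fs ⟶ 𝟭 CY) (dν : dfShriek ⋙ dfs ⟶ 𝟭 DY)
    (Nmf : fShriek ⟶ fStar) (Nmdf : dfShriek ⟶ dfStar)
    (hNmf : Nmf = Functor.whiskerLeft fShriek adjfs.unit ≫ Functor.whiskerRight ν fStar)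
    (hNmdf : Nmdf = Functor.whiskerLeft dfShriek adjdfs.unit ≫ Functor.whiskerRight dν dfStar)
    [IsIso (bcL adjf adjdf α)] [IsIso Nmf] [IsIso Nmdf]
    (hsq : bcL adjf adjdf α ≫ Functor.whiskerRight Nmf FX ≫ bcR adjfs adjdfs α =
      Functor.whiskerLeft FY Nmdf) :
    IsIso (bcR adjfs adjdfs α) ∧
      Functor.whiskerRight Nmf FX ≫
          (bcR adjfs adjdfs α ≫ Functor.whiskerLeft FY (inv Nmdf) ≫ bcL adjf adjdf α) =
        𝟙 (fShriek ⋙ FX) ∧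
      (bcR adjfs adjdfs α ≫ Functor.whiskerLeft FY (inv Nmdf) ≫ bcL adjf adjdf α) ≫
          Functor.whiskerRight Nmf FX =
        𝟙 (fStar ⋙ FX) := by
  have hbcR : bcR adjfs adjdfs α =
      inv (Functor.whiskerRight Nmf FX) ≫ inv (bcL adjf adjdf α) ≫ Functor.whiskerLeft FY Nmdf := by
    rw [← hsq]; simp only [Category.assoc, IsIso.hom_inv_id_assoc, IsIso.hom_inv_id, IsIso.inv_hom_id_assoc, IsIso.inv_hom_id]
  have hNinv : Functor.whiskerLeft FY (inv Nmdf) = inv (Functor.whiskerLeft FY Nmdf) := by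
    ext x; simp
  refine ⟨?_, ?_, ?_⟩
  · rw [hbcR]; infer_instance
  · rw [hbcR, hNinv]; simp only [Category.assoc, IsIso.hom_inv_id_assoc, IsIso.hom_inv_id, IsIso.inv_hom_id_assoc, IsIso.inv_hom_id]
  · rw [hbcR, hNinv]; simp only [Category.assoc, Category.id_comp, IsIso.hom_inv_id_assoc, IsIso.hom_inv_id, IsIso.inv_hom_id_assoc, IsIso.inv_hom_id]
end

section
/- Wrong-way unit triangle from a commuting norm square (the inductive subdiagram of the norm square theorem): In the norm square setup, suppose additionally that there are adjunctions f* ⊣ f_! with unit μ : id_{C_X} ⟶ f_! ∘ f* and counit ν, and df* ⊣ df_! with unit dμ : id_{D_X} ⟶ df_! ∘ df* and counit dν (so ν and dν are genuine counits exhibiting f_! and df_! as right adjoints of f* and df*, i.e. f and df are 'ambidextrous'). Suppose BC_![α] is a natural isomorphism, the norm maps Nm_f and Nm_{df} are natural isomorphisms, and the norm square commutes: BC_*[α] ∘ (F_X whiskered on the left with Nm_f) ∘ BC_![α] = Nm_{df} whiskered with F_Y on the right. Then the wrong-way unit triangle commutes: (BC_![α] whiskered with f* on the right) ∘ (df_!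 whiskered on the left with α⁻¹) ∘ (dμ whiskered with F_X on the right) = F_X whiskered on the left with μ, as natural transformations F_X ⟶ F_X ∘ f_! ∘ f*. -/
open CategoryTheory

/-- Wrong-way unit triangle from a commuting norm square: suppose in addition to
the norm square setup that there are adjunctions `f* ⊣ f_!` (with unit `μ` and
counit `ν`) and `df* ⊣ df_!` (with unit `dμ` and counit `dν`), that `BC_![α]`,
`Nm_f` and `Nm_{df}` are natural isomorphisms, and that the norm square
commutes.  Then `(BC_![α] ▷ f*) ∘ (df_! ◁ α⁻¹) ∘ (dμ ▷ F_X) = F_X ◁ μ` as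
natural transformations `F_X ⟶ F_X ∘ f_! ∘ f*`. -/
theorem wrong_way_unit_triangle_of_norm_square
    {CX CY DX DY : Type*} [Category CX] [Category CY] [Category DX] [Category DY]
    {fs : CX ⥤ CY} {dfs : DX ⥤ DY} {FX : CX ⥤ DX} {FY : CY ⥤ DY}
    {fShriek : CY ⥤ CX} {dfShriek : DY ⥤ DX} {fStar : CY ⥤ CX} {dfStar : DY ⥤ DX}
    (adjf : fShriek ⊣ fs) (adjdf : dfShriek ⊣ dfs)
    (adjfs : fs ⊣ fStar) (adjdfs : dfs ⊣ dfStar)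
    (α : fs ⋙ FY ≅ FX ⋙ dfs)
    (ν : fShriek ⋙ fs ⟶ 𝟭 CY) (dν : dfShriek ⋙ dfs ⟶ 𝟭 DY)
    -- `f` and `df` are ambidextrous: `ν` and `dν` are genuine counits of
    -- adjunctions `f* ⊣ f_!` and `df* ⊣ df_!`.
    (adjamb : fs ⊣ fShriek) (adjdamb : dfs ⊣ dfShriek)
    (hν : adjamb.counit = ν) (hdν : adjdamb.counit = dν)
    (Nmf : fShriek ⟶ fStar) (Nmdf : dfShriek ⟶ dfStar)
    (hNmf : Nmf = Functor.whiskerLeft fShriek adjfs.unit ≫ Functor.whiskerRight ν fStar)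
    (hNmdf : Nmdf = Functor.whiskerLeft dfShriek adjdfs.unit ≫ Functor.whiskerRight dν dfStar)
    [IsIso (bcL adjf adjdf α)] [IsIso Nmf] [IsIso Nmdf]
    (hsq : bcL adjf adjdf α ≫ Functor.whiskerRight Nmf FX ≫ bcR adjfs adjdfs α =
      Functor.whiskerLeft FY Nmdf) :
    Functor.whiskerLeft FX adjdamb.unit ≫ Functor.whiskerRight α.inv dfShriek ≫
        Functor.whiskerLeft fs (bcL adjf adjdf α) =
      Functor.whiskerRight adjamb.unit FX := by

  have key : ∀ Y : CY,
      dfs.map ((bcL adjf adjdf α).app Y) ≫ α.inv.app (fShriek.obj Y) ≫ FY.map (ν.app Y) =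
        dν.app (FY.obj Y) := by
    intro Y
    have h1 : (bcL adjf adjdf α).app Y ≫ FX.map (Nmf.app Y) ≫ (bcR adjfs adjdfs α).app Y =
        Nmdf.app (FY.obj Y) := by
      have := congrArg (fun t => NatTrans.app t Y) hsq
      simpa using this
    have h2 := congrArg (fun g => dfs.map g ≫ adjdfs.counit.app (FY.obj Y)) h1
    simp only [hNmdf, hNmf, bcR, NatTrans.comp_app, Functor.whiskerLeft_app, Functor.whiskerRight_app,
      Functor.comp_map, Functor.comp_obj, Functor.id_obj, Functor.map_comp, Category.assoc,
      Adjunction.counit_naturality, Adjunction.counit_naturality_assoc,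
      Adjunction.left_triangle_components, Adjunction.left_triangle_components_assoc,
      Category.comp_id, Category.id_comp] at h2
    rw [← h2]
    congr 1
    have n1 := reassoc_of% (α.inv.naturality (fStar.map (ν.app Y)))
    have n2 := reassoc_of% (α.inv.naturality (adjfs.unit.app (fShriek.obj Y)))
    rw [n1, n2]
    simp [← Functor.map_comp]
  ext X
  simp only [NatTrans.comp_app, Functor.whiskerLeft_app, Functor.whiskerRight_app]
  rw [← Category.assoc, ← IsIso.eq_comp_inv]
  apply (adjdamb.homEquiv _ _).symm.injective
  simp only [Adjunction.homEquiv_counit, Functor.comp_obj, Functor.id_obj,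
    Functor.map_comp, Category.assoc]
  trans α.inv.app X
  · simp
  · 
    have hinv : dfs.map (inv ((bcL adjf adjdf α).app (fs.obj X))) ≫
        adjdamb.counit.app (FY.obj (fs.obj X)) =
        α.inv.app (fShriek.obj (fs.obj X)) ≫ FY.map (ν.app (fs.obj X)) := by
      rw [hdν, ← key (fs.obj X), ← Category.assoc, ← Functor.map_comp, IsIso.inv_hom_id,
        dfs.map_id, Category.id_comp]
    rw [hinv]
    have hnat := reassoc_of% (α.inv.naturality (adjamb.unit.app X))
    rw [hnat, ← Functor.map_comp, ← hν, adjamb.left_triangle_components,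
      FY.map_id, Category.comp_id]
end
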